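/- Birth-death Wasserstein contraction via weights: let G generate a birth-death type process on {0,…,N} with birth rates b_k and death rates d_k, and let (u_k)_{0≤k≤N−1} be positive numbers defining the distance δ_u(n,n') = ∑_{k=n}^{n'−1} u_k for n < n'. Set λ_u = min_{0≤k≤N−1}[d_{k+1} − d_k·u_{k−1}/u_k + b_k − b_{k+1}·u_{k+1}/u_k] (with the conventions d_0 = 0, b_N = 0, boundary terms omitted). Then the coordinatewise-monotone coupling generator 𝔾 satisfies 𝔾δ_u(n, n+1) ≤ −λ_u·δ_u(n, n+1) for every n, and hence by linearity 𝔾δ_u(n,n') ≤ −λ_u·δ_u(n,n') for all n < n'. -/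
import Mathlib


/-- Birth-death Wasserstein contraction via weights: if `𝔾` is the coordinatewise
monotone coupling generator of a birth-death process on `{0,…,N}` (with the stated
jump rates from an adjacent pair `(n,n+1)`, and additive over the decomposition of a
pair `(n,n')` into adjacent pairs), and
`λ_u = min_k [d_{k+1} - d_k u_{k-1}/u_k + b_k - b_{k+1} u_{k+1}/u_k]`, then
`𝔾 δ_u(n,n') ≤ -λ_u δ_u(n,n')` for all `n < n' ≤ N`. -/
theorem stmt_19 (N : ℕ) (hN : 1 ≤ N) (bR dR u : ℕ → ℝ)
    (hu : ∀ k, k < N → 0 < u k)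
    (hbnn : ∀ k, 0 ≤ bR k) (hdnn : ∀ k, 0 ≤ dR k)
    (hd0 : dR 0 = 0) (hbN : bR N = 0)
    (hbmono : ∀ n, n < N → bR (n + 1) ≤ bR n)
    (hdmono : ∀ n, n < N → dR n ≤ dR (n + 1))
    (δ : ℕ → ℕ → ℝ) (hδ : ∀ n n', δ n n' = ∑ k ∈ Finset.Ico n n', u k)
    (G : ℕ → ℕ → ℝ)
    (hGadj : ∀ n, n + 1 ≤ N → G n (n + 1) =
      dR n * (δ (n - 1) n - δ n (n + 1)) +
        bR (n + 1) * (δ (n + 1) (n + 2) - δ n (n + 1)) +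
        (bR n - bR (n + 1)) * (δ (n + 1) (n + 1) - δ n (n + 1)) +
        (dR (n + 1) - dR n) * (δ n n - δ n (n + 1)))
    (hGlin : ∀ n n', n ≤ n' → n' ≤ N → G n n' = ∑ k ∈ Finset.Ico n n', G k (k + 1))
    (lam : ℝ)
    (hlam : lam = (Finset.range N).inf' (Finset.nonempty_range_iff.mpr (by omega))
      (fun k => dR (k + 1) - dR k * u (k - 1) / u k + bR k - bR (k + 1) * u (k + 1) / u k)) :
    ∀ n n', n < n' → n' ≤ N → G n n' ≤ -lam * δ n n' := by
  have hδa : ∀ m : ℕ, δ m (m + 1) = u m := by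
    intro m; rw [hδ]; simp
  have hδ0 : ∀ m : ℕ, δ m m = 0 := by
    intro m; rw [hδ]; simp
  have key : ∀ n, n < N → G n (n + 1) ≤ -lam * u n := by
    intro n hn
    have hun := hu n hn
    have hdd : dR n * δ (n - 1) n = dR n * u (n - 1) := by
      cases n with
      | zero => simp [hd0]
      | succ m => simp [hδa m]
    have hlamle : lam ≤ dR (n + 1) - dR n * u (n - 1) / u n + bR n -
        bR (n + 1) * u (n + 1) / u n := by
      rw [hlam]
      exact Finset.inf'_le _ (Finset.mem_range.mpr hn)
    have h1 : dR n * u (n - 1) / u n * u n = dR n * u (n - 1) :=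
      div_mul_cancel₀ _ hun.ne'
    have h2 : bR (n + 1) * u (n + 1) / u n * u n = bR (n + 1) * u (n + 1) :=
      div_mul_cancel₀ _ hun.ne'
    have hmul := mul_le_mul_of_nonneg_right hlamle hun.le
    have hG : G n (n + 1) =
        dR n * u (n - 1) - dR n * u n + (bR (n + 1) * u (n + 1) - bR (n + 1) * u n)
          + (bR n - bR (n + 1)) * (0 - u n) + (dR (n + 1) - dR n) * (0 - u n) := by
      rw [hGadj n (by omega), hδa n, hδa (n + 1), hδ0 (n + 1), hδ0 n, mul_sub, hdd]; ring
    rw [hG]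
    nlinarith [hmul, h1, h2]
  intro n n' hlt hle
  rw [hGlin n n' hlt.le hle, hδ n n', Finset.mul_sum]
  apply Finset.sum_le_sum
  intro k hk
  have hkN : k < N := by
    have := (Finset.mem_Ico.mp hk).2; omega
  exact key k hkN
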